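/- Let A be a Noetherian ring and a an ideal of A. For h ∈ ℕ, the set a_{>h} = { x ∈ A : height(a :_A x) > h } is an ideal of A, and it equals the intersection of the primary components of a of height at most h (in any primary decomposition of a). -/

import Mathlib

noncomputable section
open scoped Classical

/-- The height of an ideal `I`: the infimum of the heights of the primes containing
`I` (so `height ⊤ = ⊤`, the empty infimum). -/
def idealHeight {A : Type*} [CommRing A] (I : Ideal A) : ℕ∞ :=
  ⨅ p : {p : PrimeSpectrum A // I ≤ p.asIdeal}, Order.height p.1

lemma lt_idealHeight_iff {A : Type*} [CommRing A] (I : Ideal A) (h : ℕ) :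
    (h : ℕ∞) < idealHeight I ↔
      ∀ p : PrimeSpectrum A, I ≤ p.asIdeal → (h : ℕ∞) < Order.height p := by
  constructor
  · intro H p hp
    exact lt_of_lt_of_le H (iInf_le (fun p : {p : PrimeSpectrum A // I ≤ p.asIdeal} => Order.height p.1) ⟨p, hp⟩)
  · intro H
    have h1 : ((h : ℕ∞) + 1) ≤ idealHeight I :=
      le_iInf fun p => Order.add_one_le_of_lt (H p.1 p.2)
    have h2 : (h : ℕ∞) < (h : ℕ∞) + 1 :=
      (ENat.lt_add_one_iff (by simp : (h:ℕ∞) ≠ ⊤)).mpr le_rfl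
    exact lt_of_lt_of_le h2 h1

/-- Let `A` be Noetherian, `a ⊆ A` an ideal, `h ∈ ℕ`.  Given an
irredundant primary decomposition `a = ⋂ Q`, the set
`a_{>h} = { x : height (a : x) > h }` equals (hence is an ideal) the intersection of
the primary components of `a` of height at most `h` (the empty intersection being `A`). -/
theorem stmt16 {A : Type*} [CommRing A] [IsNoetherianRing A] (a : Ideal A) (h : ℕ)
    (Q : Finset (Ideal A)) (hQ : ∀ q ∈ Q, q.IsPrimary)
    (hdec : a = sInf (Q : Set (Ideal A)))
    (hirr : ∀ q ∈ Q, a ≠ sInf ((Q.erase q : Finset (Ideal A)) : Set (Ideal A)))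
    (hrad : ∀ q ∈ Q, ∀ q' ∈ Q, q ≠ q' → q.radical ≠ q'.radical) :
    {x : A | (h : ℕ∞) < idealHeight (a.colon (Ideal.span {x}))} =
      ↑(sInf {q : Ideal A | q ∈ Q ∧ idealHeight q.radical ≤ (h : ℕ∞)}) := by
  ext x
  simp only [Set.mem_setOf_eq, SetLike.mem_coe, Ideal.mem_sInf]
  rw [lt_idealHeight_iff]
  have hcolon : a.colon (Ideal.span {x}) = Q.inf (fun q => q.colon (Ideal.span {x})) := by
    ext r
    simp only [Ideal.mem_colon_span_singleton, hdec, Ideal.mem_sInf, Submodule.mem_finsetInf,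
      Finset.mem_coe]
  constructor
  · intro H q hq
    obtain ⟨hqQ, hle⟩ := hq
    by_contra hx
    have hlt : (h : ℕ∞) < idealHeight q.radical := by
      rw [lt_idealHeight_iff]
      intro p hp
      apply H p
      rw [hcolon]
      refine le_trans (Finset.inf_le hqQ) ?_
      intro r hr
      rw [Ideal.mem_colon_span_singleton] at hr
      rcases (Ideal.isPrimary_iff.mp (hQ q hqQ)).2 (by rwa [mul_comm] at hr) with h1 | h1
      · exact absurd h1 hx
      · exact hp h1
    exact absurd hle (not_le.mpr hlt)
  · intro H p hp
    rw [hcolon] at hp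
    obtain ⟨q, hqQ, hqle⟩ := (p.isPrime.inf_le').mp hp
    by_cases hx : x ∈ q
    · exfalso
      have h1 : (1 : A) ∈ q.colon (Ideal.span {x}) := by
        rw [Ideal.mem_colon_span_singleton, one_mul]; exact hx
      exact p.isPrime.ne_top (Ideal.eq_top_iff_one _ |>.mpr (hqle h1))
    · have hrle : q.radical ≤ p.asIdeal := by
        intro y hy
        obtain ⟨n, hn⟩ := Ideal.mem_radical_iff.mp hy
        have hyn : y ^ n ∈ p.asIdeal := by
          apply hqle
          rw [Ideal.mem_colon_span_singleton]
          exact Ideal.mul_mem_right x _ hn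
        exact p.isPrime.mem_of_pow_mem n hyn
      have hnle : ¬ idealHeight q.radical ≤ (h : ℕ∞) := fun hle => hx (H ⟨hqQ, hle⟩)
      exact lt_of_lt_of_le (not_le.mp hnle) (iInf_le (fun p : {p : PrimeSpectrum A // q.radical ≤ p.asIdeal} => Order.height p.1) ⟨p, hrle⟩)

end
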